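/- Let p ∈ (1,∞). Define the weights w(t) := |t|^{p−1} and σ(t) := |t|^{−p/(p−1)} for |t| > 1, σ(t) := 1 for |t| ≤ 1. Then there exists a constant C(p) < ∞ such that for every bounded interval I ⊂ ℝ with |I| > 0, ⟨w⟩_I · ⟨σ⟩_I^{p−1} ≤ C(p). -/

import Mathlib

open MeasureTheory Set

/-- Average of `w` over the interval `[a, b)`. -/
noncomputable def avgOn (w : ℝ → ℝ) (a b : ℝ) : ℝ :=
  (b - a)⁻¹ * ∫ x in Set.Ico a b, w x

open Real

lemma avgOn_nonneg {f : ℝ → ℝ} {a b : ℝ} (hab : a ≤ b) (hf : ∀ x, 0 ≤ f x) :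
    0 ≤ avgOn f a b :=
  mul_nonneg (inv_nonneg.2 (sub_nonneg.2 hab))
    (setIntegral_nonneg measurableSet_Ico fun x _ => hf x)

lemma avgOn_le {f : ℝ → ℝ} {a b K : ℝ} (hab : a < b) (hf : IntegrableOn f (Ico a b))
    (hK : ∀ x ∈ Ico a b, f x ≤ K) : avgOn f a b ≤ K := by
  have hL : (0:ℝ) < b - a := sub_pos.2 hab
  have h1 : ∫ x in Ico a b, f x ≤ ∫ x in Ico a b, (K : ℝ) := by
    refine setIntegral_mono_on hf ?_ measurableSet_Ico hK
    exact integrableOn_const measure_Ico_lt_top.ne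
  rw [setIntegral_const, measureReal_def, Real.volume_Ico, ENNReal.toReal_ofReal hL.le, smul_eq_mul] at h1
  calc avgOn f a b ≤ (b - a)⁻¹ * ((b - a) * K) :=
        mul_le_mul_of_nonneg_left h1 (inv_nonneg.2 hL.le)
    _ = K := by field_simp

lemma avgOn_le_of_integral {f : ℝ → ℝ} {a b S : ℝ} (hab : a < b)
    (hf : Integrable f) (hf0 : ∀ x, 0 ≤ f x) (hS : ∫ x, f x ≤ S) :
    avgOn f a b ≤ (b - a)⁻¹ * S := by
  have hL : (0:ℝ) < b - a := sub_pos.2 hab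
  have h1 : ∫ x in Ico a b, f x ≤ ∫ x, f x :=
    setIntegral_le_integral hf (Filter.Eventually.of_forall hf0)
  exact mul_le_mul_of_nonneg_left (h1.trans hS) (inv_nonneg.2 hL.le)

lemma sigma_integrable {q : ℝ} (hq : 1 < q) :
    Integrable (fun t : ℝ => if |t| ≤ 1 then (1:ℝ) else |t| ^ (-q)) := by
  set σ : ℝ → ℝ := fun t => if |t| ≤ 1 then (1:ℝ) else |t| ^ (-q) with hσ
  have hIoi : IntegrableOn σ (Ioi (1:ℝ)) := by
    refine (integrableOn_Ioi_rpow_of_lt (by linarith : -q < -1) one_pos).congr_fun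
      (fun x hx => ?_) measurableSet_Ioi
    have hx1 : (1:ℝ) < x := hx
    rw [hσ]
    simp only [abs_of_pos (lt_trans one_pos hx1)]
    rw [if_neg (by linarith)]
  have hIcc : IntegrableOn σ (Icc (-1:ℝ) 1) := by
    refine (integrableOn_const measure_Icc_lt_top.ne :
      IntegrableOn (fun _ => (1:ℝ)) _ _).congr_fun (fun x hx => ?_) measurableSet_Icc
    rw [hσ]
    simp only [if_pos (abs_le.2 ⟨hx.1, hx.2⟩)]
  have hIio : IntegrableOn σ (Iio (-1:ℝ)) := by
    have key : IntegrableOn (fun t : ℝ => σ (-t)) (Ioi (1:ℝ)) := by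
      refine hIoi.congr_fun (fun x hx => ?_) measurableSet_Ioi
      simp [hσ, abs_neg]
    have := (Measure.measurePreserving_neg (volume : Measure ℝ)).integrableOn_comp_preimage
      (Homeomorph.neg ℝ).measurableEmbedding (f := σ) (s := Iio (-1:ℝ))
    rw [← this]
    simpa [Function.comp_def, neg_Iio] using key
  have huniv : (univ : Set ℝ) = Iio (-1) ∪ (Icc (-1) 1 ∪ Ioi 1) := by
    ext x
    simp only [mem_univ, mem_union, mem_Iio, mem_Icc, mem_Ioi, true_iff]
    rcases lt_trichotomy x (-1) with h | h | h
    · exact Or.inl h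
    · exact Or.inr (Or.inl ⟨le_of_eq h.symm, by linarith⟩)
    · rcases le_or_gt x 1 with h2 | h2
      · exact Or.inr (Or.inl ⟨h.le, h2⟩)
      · exact Or.inr (Or.inr h2)
  rw [← integrableOn_univ, huniv]
  exact (hIio.union (hIcc.union hIoi))

theorem statement16 (p : ℝ) (hp : 1 < p) :
    ∃ C : ℝ, ∀ a b : ℝ, a < b →
      avgOn (fun t => |t| ^ (p - 1)) a b *
        (avgOn (fun t => if |t| ≤ 1 then 1 else |t| ^ (-(p / (p - 1)))) a b) ^ (p - 1) ≤ C := by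
  have hp1 : (0:ℝ) < p - 1 := by linarith
  set q : ℝ := p / (p - 1) with hqdef
  have hq : 1 < q := (one_lt_div hp1).2 (by linarith)
  have hqp : q * (p - 1) = p := div_mul_cancel₀ p (ne_of_gt hp1)
  set σ : ℝ → ℝ := fun t => if |t| ≤ 1 then (1:ℝ) else |t| ^ (-q) with hσdef
  set w : ℝ → ℝ := fun t => |t| ^ (p - 1) with hwdef
  have hσ0 : ∀ t, 0 ≤ σ t := by
    intro t; rw [hσdef]; dsimp only
    split
    · exact zero_le_one
    · exact rpow_nonneg (abs_nonneg t) _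
  have hσ1 : ∀ t, σ t ≤ 1 := by
    intro t; rw [hσdef]; dsimp only
    split
    · exact le_refl 1
    · exact rpow_le_one_of_one_le_of_nonpos (by linarith [not_le.1 ‹¬ |t| ≤ 1›]) (by linarith)
  have hw0 : ∀ t, 0 ≤ w t := fun t => rpow_nonneg (abs_nonneg t) _
  have hσint : Integrable σ := sigma_integrable hq
  set S : ℝ := ∫ t, σ t with hSdef
  have hS0 : 0 ≤ S := integral_nonneg hσ0
  refine ⟨2 ^ (p - 1) + (2 * S) ^ (p - 1), ?_⟩
  intro a b hab
  set M : ℝ := max |a| |b| with hMdef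
  have hM0 : 0 ≤ M := le_trans (abs_nonneg a) (le_max_left _ _)
  have habsM : ∀ t ∈ Ico a b, |t| ≤ M := fun t ht =>
    abs_le_max_abs_abs ht.1 ht.2.le
  have hwint : IntegrableOn w (Ico a b) := by
    have hc : Continuous w := by
      apply Continuous.rpow_const continuous_abs
      intro x; exact Or.inr hp1.le
    exact (hc.integrableOn_Icc).mono_set Ico_subset_Icc_self
  have hwavg : avgOn w a b ≤ M ^ (p - 1) :=
    avgOn_le hab hwint fun t ht =>
      rpow_le_rpow (abs_nonneg t) (habsM t ht) hp1.le
  have hwavg0 : 0 ≤ avgOn w a b := avgOn_nonneg hab.le hw0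
  have hσavg0 : 0 ≤ avgOn σ a b := avgOn_nonneg hab.le hσ0
  have key : ∀ X Y : ℝ, 0 ≤ Y → avgOn w a b ≤ X → avgOn σ a b ≤ Y →
      avgOn w a b * (avgOn σ a b) ^ (p - 1) ≤ X * Y ^ (p - 1) := by
    intro X Y hY hwX hσY
    exact mul_le_mul hwX (rpow_le_rpow hσavg0 hσY hp1.le)
      (rpow_nonneg hσavg0 _) (le_trans hwavg0 hwX)
  have h2S0 : 0 ≤ (2 * S) ^ (p - 1) := rpow_nonneg (by linarith) _
  have h2p0 : 0 ≤ (2:ℝ) ^ (p - 1) := rpow_nonneg (by norm_num) _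
  by_cases hM : M ≤ 2
  · -- small interval case
    have h1 : avgOn w a b * (avgOn σ a b) ^ (p - 1) ≤ 2 ^ (p - 1) * 1 ^ (p - 1) := by
      refine key _ _ zero_le_one ?_ (avgOn_le hab hσint.integrableOn fun t _ => hσ1 t)
      exact hwavg.trans (rpow_le_rpow hM0 hM hp1.le)
    rw [one_rpow, mul_one] at h1
    linarith
  · push_neg at hM
    have hM2 : (1:ℝ) < M / 2 := by linarith
    have hMpos : (0:ℝ) < M := by linarith
    by_cases hL : M / 2 ≤ b - a
    · -- long interval case
      have hσavg : avgOn σ a b ≤ 2 * S / M := by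
        have h1 : avgOn σ a b ≤ (b - a)⁻¹ * S :=
          avgOn_le_of_integral hab hσint hσ0 le_rfl
        have h2 : (b - a)⁻¹ ≤ (M / 2)⁻¹ :=
          inv_anti₀ (by linarith) hL
        calc avgOn σ a b ≤ (b - a)⁻¹ * S := h1
          _ ≤ (M / 2)⁻¹ * S := mul_le_mul_of_nonneg_right h2 hS0
          _ = 2 * S / M := by field_simp
      have h1 := key (M ^ (p - 1)) (2 * S / M) (by positivity) hwavg hσavg
      have h2 : M ^ (p - 1) * (2 * S / M) ^ (p - 1) = (2 * S) ^ (p - 1) := by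
        rw [← mul_rpow hM0 (by positivity), mul_div_cancel₀ _ (ne_of_gt hMpos)]
      linarith [h1, h2 ▸ h1]
    · -- short interval, far from origin
      push_neg at hL
      have hfar : ∀ t ∈ Ico a b, M / 2 < |t| := by
        intro t ht
        obtain ⟨ht1, ht2⟩ := ht
        rcases max_cases |a| |b| with ⟨hMa, hba⟩ | ⟨hMb, hab'⟩
        · -- M = |a|
          rcases le_or_gt 0 a with ha | ha
          · have : a = M := by rw [hMdef, hMa, abs_of_nonneg ha]
            have : M / 2 < t := by linarith
            calc M / 2 < t := this
              _ ≤ |t| := le_abs_self t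
          · have haM : a = -M := by rw [hMdef, hMa, abs_of_neg ha]; ring
            have : t < -(M / 2) := by linarith [haM]
            calc M / 2 < -t := by linarith
              _ ≤ |t| := neg_le_abs t
        · -- M = |b|
          have hb0 : 0 ≤ b := by
            by_contra hb
            push_neg at hb
            have : |a| > |b| := by
              rw [abs_of_neg (lt_trans hab hb), abs_of_neg hb]; linarith
            linarith
          have hbM : b = M := by rw [hMdef, hMb, abs_of_nonneg hb0]
          have : M / 2 < t := by linarith
          calc M / 2 < t := this
            _ ≤ |t| := le_abs_self t
      have hσbd : ∀ t ∈ Ico a b, σ t ≤ (M / 2) ^ (-q) := by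
        intro t ht
        have h1 : M / 2 < |t| := hfar t ht
        rw [hσdef]
        dsimp only
        rw [if_neg (by push_neg; linarith)]
        exact rpow_le_rpow_of_nonpos (by linarith) h1.le (by linarith)
      have hσavg : avgOn σ a b ≤ (M / 2) ^ (-q) :=
        avgOn_le hab hσint.integrableOn hσbd
      have h1 := key (M ^ (p - 1)) ((M / 2) ^ (-q)) (rpow_nonneg (by linarith) _) hwavg hσavg
      have hMp : (0:ℝ) < M ^ p := rpow_pos_of_pos hMpos p
      have h2pp : (0:ℝ) < (2:ℝ) ^ p := rpow_pos_of_pos two_pos p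
      have e1 : ((M / 2) ^ (-q)) ^ (p - 1) = (M / 2) ^ (-p) := by
        rw [← rpow_mul (by linarith : (0:ℝ) ≤ M / 2)]
        congr 1
        rw [neg_mul, hqp]
      have e2 : M ^ (p - 1) * (M / 2) ^ (-p) = 2 ^ p / M := by
        rw [rpow_sub hMpos, rpow_one, rpow_neg (by positivity),
          div_rpow hM0 (by norm_num : (0:ℝ) ≤ 2)]
        field_simp
      have e3 : (2:ℝ) ^ p / M ≤ 2 ^ (p - 1) := by
        rw [rpow_sub (by norm_num : (0:ℝ) < 2), rpow_one]
        exact div_le_div_of_nonneg_left h2pp.le two_pos hM.le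
      have h2 : M ^ (p - 1) * ((M / 2) ^ (-q)) ^ (p - 1) ≤ 2 ^ (p - 1) := by
        rw [e1, e2]; exact e3
      linarith
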